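/- Let d be odd, n = ⌈log₂((d-1)/2)⌉, r ≥ 4 even, q = √(2/d), p = √(1 - q²(d-1)/2). Define r·2ⁿ unit vectors in R^d indexed by (i,j) with i ∈ [2ⁿ], j ∈ [r]: the vector has first (d-1)/2 entries s_{i,k}·q·cos(2πj/r), next (d-1)/2 entries s_{i,k}·q·sin(2πj/r), and last entry (-1)^j·p, where the signs s_{i,k} ∈ {±1} are the entries of column i of a matrix H' consisting of (d-1)/2 distinct rows of a 2ⁿ×2ⁿ Hadamard matrix. Then the sum of rank-one projectors onto these vectors equals (r·2ⁿ/d)·I_d. -/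

import Mathlib

open Real Finset

lemma sumIcc_pow_eq_zero (r : ℕ) (z : ℂ) (hz : z ≠ 1) (hzr : z ^ r = 1) :
    ∑ j ∈ Icc 1 r, z ^ j = 0 := by
  have h : ∑ j ∈ Finset.range r, z ^ j = 0 := by
    rw [geom_sum_eq hz r, hzr]; simp
  calc ∑ j ∈ Icc 1 r, z ^ j = ∑ j ∈ Finset.range (r + 1 - 1), z ^ (1 + j) := by
        rw [show Icc 1 r = Ico 1 (r + 1) by ext x; simp,
          Finset.sum_Ico_eq_sum_range]
    _ = z * ∑ j ∈ Finset.range r, z ^ j := by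
        simp [pow_add, Finset.mul_sum]
    _ = 0 := by rw [h, mul_zero]

lemma trig_sums (r : ℕ) (hr4 : 4 ≤ r) (hre : Even r) :
    (∑ j ∈ Icc 1 r, Real.cos (2 * π * j / r) ^ 2 = r / 2) ∧
    (∑ j ∈ Icc 1 r, Real.sin (2 * π * j / r) ^ 2 = r / 2) ∧
    (∑ j ∈ Icc 1 r, Real.cos (2 * π * j / r) * Real.sin (2 * π * j / r) = 0) ∧
    (∑ j ∈ Icc 1 r, (-1 : ℝ) ^ j * Real.cos (2 * π * j / r) = 0) ∧
    (∑ j ∈ Icc 1 r, (-1 : ℝ) ^ j * Real.sin (2 * π * j / r) = 0) := by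
  have hr0 : r ≠ 0 := by omega
  set ζ : ℂ := Complex.exp (2 * ↑π * Complex.I / r) with hζ
  have hprim : IsPrimitiveRoot ζ r := Complex.isPrimitiveRoot_exp r hr0
  have hζr : ζ ^ r = 1 := hprim.pow_eq_one
  have hζ1 : ζ ≠ 1 := hprim.ne_one (by omega)
  have hζ2 : ζ ^ 2 ≠ 1 := hprim.pow_ne_one_of_pos_of_lt (by norm_num) (by omega)
  have hζ2r : (ζ ^ 2) ^ r = 1 := by rw [← pow_mul, mul_comm, pow_mul, hζr, one_pow]
  have hnζ1 : -ζ ≠ 1 := by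
    intro h
    apply hζ2
    have : ζ = -1 := by linear_combination -h
    rw [this]; norm_num
  have hnζr : (-ζ) ^ r = 1 := by rw [hre.neg_pow, hζr]
  have hpow : ∀ j : ℕ, ζ ^ j = Complex.exp (((2 * π * j / r : ℝ) : ℂ) * Complex.I) := by
    intro j
    rw [hζ, ← Complex.exp_nat_mul]
    congr 1
    push_cast
    ring
  have hre' : ∀ j : ℕ, (ζ ^ j).re = Real.cos (2 * π * j / r) := by
    intro j; rw [hpow j, Complex.exp_ofReal_mul_I_re]
  have him' : ∀ j : ℕ, (ζ ^ j).im = Real.sin (2 * π * j / r) := by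
    intro j; rw [hpow j, Complex.exp_ofReal_mul_I_im]
  have hre2 : ∀ j : ℕ, ((ζ ^ 2) ^ j).re = Real.cos (2 * (2 * π * j / r)) := by
    intro j
    rw [show (ζ ^ 2) ^ j = ζ ^ (j * 2) by rw [← pow_mul, mul_comm], hpow (j * 2),
      Complex.exp_ofReal_mul_I_re]
    congr 1
    push_cast
    ring
  have him2 : ∀ j : ℕ, ((ζ ^ 2) ^ j).im = Real.sin (2 * (2 * π * j / r)) := by
    intro j
    rw [show (ζ ^ 2) ^ j = ζ ^ (j * 2) by rw [← pow_mul, mul_comm], hpow (j * 2),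
      Complex.exp_ofReal_mul_I_im]
    congr 1
    push_cast
    ring
  have S2 := sumIcc_pow_eq_zero r (ζ ^ 2) hζ2 hζ2r
  have SN := sumIcc_pow_eq_zero r (-ζ) hnζ1 hnζr
  have cardIcc : (Icc 1 r).card = r := by rw [Nat.card_Icc]; omega
  have T2c : ∑ j ∈ Icc 1 r, Real.cos (2 * (2 * π * j / r)) = 0 := by
    have := congrArg Complex.re S2
    rw [Complex.re_sum] at this
    simpa [hre2] using this
  have T2s : ∑ j ∈ Icc 1 r, Real.sin (2 * (2 * π * j / r)) = 0 := by
    have := congrArg Complex.im S2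
    rw [Complex.im_sum] at this
    simpa [him2] using this
  refine ⟨?_, ?_, ?_, ?_, ?_⟩
  · have : ∀ j ∈ Icc 1 r, Real.cos (2 * π * j / r) ^ 2
        = 1 / 2 + Real.cos (2 * (2 * π * j / r)) / 2 := fun j _ => Real.cos_sq _
    rw [Finset.sum_congr rfl this, Finset.sum_add_distrib, Finset.sum_const, cardIcc,
      ← Finset.sum_div, T2c]
    push_cast
    ring
  · have : ∀ j ∈ Icc 1 r, Real.sin (2 * π * j / r) ^ 2
        = 1 / 2 - Real.cos (2 * (2 * π * j / r)) / 2 := by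
      intro j _
      rw [Real.sin_sq]
      ring_nf
      rw [Real.cos_sq]
      ring
    rw [Finset.sum_congr rfl this, Finset.sum_sub_distrib, Finset.sum_const, cardIcc,
      ← Finset.sum_div, T2c]
    push_cast
    ring
  · have : ∀ j ∈ Icc 1 r, Real.cos (2 * π * j / r) * Real.sin (2 * π * j / r)
        = Real.sin (2 * (2 * π * j / r)) / 2 := by
      intro j _
      rw [Real.sin_two_mul]
      ring
    rw [Finset.sum_congr rfl this, ← Finset.sum_div, T2s]
    norm_num
  · have hreN : ∀ j : ℕ, ((-ζ) ^ j).re = (-1 : ℝ) ^ j * Real.cos (2 * π * j / r) := by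
      intro j
      rw [neg_pow, show ((-1 : ℂ)) ^ j = (((-1 : ℝ) ^ j : ℝ) : ℂ) by push_cast; ring,
        Complex.re_ofReal_mul, hre']
    have := congrArg Complex.re SN
    rw [Complex.re_sum] at this
    simpa [hreN] using this
  · have himN : ∀ j : ℕ, ((-ζ) ^ j).im = (-1 : ℝ) ^ j * Real.sin (2 * π * j / r) := by
      intro j
      rw [neg_pow, show ((-1 : ℂ)) ^ j = (((-1 : ℝ) ^ j : ℝ) : ℂ) by push_cast; ring,
        Complex.im_ofReal_mul, him']
    have := congrArg Complex.im SN
    rw [Complex.im_sum] at this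
    simpa [himN] using this

lemma sum_sum_eq_mul (s t : Finset ℕ) (P : ℕ → ℕ → ℝ) (f g : ℕ → ℝ)
    (h : ∀ i ∈ s, ∀ j ∈ t, P i j = f i * g j) :
    ∑ i ∈ s, ∑ j ∈ t, P i j = (∑ i ∈ s, f i) * (∑ j ∈ t, g j) := by
  rw [Finset.sum_mul_sum]
  exact Finset.sum_congr rfl fun i hi => Finset.sum_congr rfl fun j hj => h i hi j hj

theorem hadamard_vectors_resolution_of_identity
    (d n r : ℕ) (hd : Odd d) (hd3 : 3 ≤ d)
    (hn : n = Nat.clog 2 ((d - 1) / 2)) (hr4 : 4 ≤ r) (hre : Even r)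
    (q p : ℝ) (hq : q = Real.sqrt (2 / d)) (hp : p = Real.sqrt (1 - q ^ 2 * (d - 1) / 2))
    (H' : ℕ → ℕ → ℝ)
    (hH1 : ∀ k < (d - 1) / 2, ∀ i < 2 ^ n, H' k i = 1 ∨ H' k i = -1)
    (hH2 : ∀ k < (d - 1) / 2, ∀ k' < (d - 1) / 2, k ≠ k' →
      ∑ i ∈ range (2 ^ n), H' k i * H' k' i = 0)
    (u : ℕ → ℕ → ℕ → ℝ)
    (hu1 : ∀ i j a, a < (d - 1) / 2 →
      u i j a = H' a i * q * cos (2 * π * j / r))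
    (hu2 : ∀ i j a, (d - 1) / 2 ≤ a → a < d - 1 →
      u i j a = H' (a - (d - 1) / 2) i * q * sin (2 * π * j / r))
    (hu3 : ∀ i j, u i j (d - 1) = (-1 : ℝ) ^ j * p) :
    (∀ i ∈ range (2 ^ n), ∀ j ∈ Icc 1 r,
      ∑ a ∈ range d, (u i j a) ^ 2 = 1) ∧
    (∀ a ∈ range d, ∀ b ∈ range d,
      ∑ i ∈ range (2 ^ n), ∑ j ∈ Icc 1 r, u i j a * u i j b
        = if a = b then (r * 2 ^ n : ℝ) / d else 0) := by
  obtain ⟨m, hm0⟩ := hd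
  have hm : d = 2 * m + 1 := by omega
  have hm1 : 1 ≤ m := by omega
  have hm2 : (d - 1) / 2 = m := by omega
  have hd1 : d - 1 = 2 * m := by omega
  rw [hm2] at hH1 hH2 hu1 hu2
  rw [hd1] at hu2 hu3
  have hdR : (d : ℝ) = 2 * m + 1 := by rw [hm]; push_cast; ring
  have hdne : (d : ℝ) ≠ 0 := by rw [hdR]; positivity
  have hq2 : q ^ 2 = 2 / d := by
    rw [hq, sq_sqrt (by positivity)]
  have hval : 1 - q ^ 2 * ((d : ℝ) - 1) / 2 = 1 / d := by
    rw [hq2]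
    field_simp
    ring
  have hp2 : p ^ 2 = 1 / d := by
    rw [hp, hval, sq_sqrt (by positivity)]
  obtain ⟨T1, T2, T3, T4, T5⟩ := trig_sums r hr4 hre
  have cardIcc : (Icc 1 r).card = r := by rw [Nat.card_Icc]; omega
  have hsq : ∀ k, k < m → ∀ i ∈ range (2 ^ n), H' k i * H' k i = 1 := by
    intro k hk i hi
    rcases hH1 k hk i (mem_range.mp hi) with h | h <;> rw [h] <;> norm_num
  have hIdiag : ∀ k, k < m → ∑ i ∈ range (2 ^ n), H' k i * H' k i = (2 ^ n : ℝ) := by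
    intro k hk
    rw [Finset.sum_congr rfl (hsq k hk), Finset.sum_const, card_range, nsmul_eq_mul,
      mul_one]
    push_cast
    ring
  constructor
  · -- unit norm
    intro i hi j hj
    have hi' := mem_range.mp hi
    have h1 : ∀ a ∈ range m, u i j a ^ 2 = q ^ 2 * Real.cos (2 * π * j / r) ^ 2 := by
      intro a ha
      have ham := mem_range.mp ha
      rw [hu1 i j a ham]
      have h := hsq a ham i hi
      linear_combination (q ^ 2 * Real.cos (2 * π * j / r) ^ 2) * h
    have h2 : ∀ a ∈ range (2 * m - m), u i j (m + a) ^ 2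
        = q ^ 2 * Real.sin (2 * π * j / r) ^ 2 := by
      intro a ha
      have ham : a < m := by have := mem_range.mp ha; omega
      have hsub : m + a - m = a := by omega
      rw [hu2 i j (m + a) (by omega) (by omega), hsub]
      have h := hsq a ham i hi
      linear_combination (q ^ 2 * Real.sin (2 * π * j / r) ^ 2) * h
    have hsplit : ∑ a ∈ range d, u i j a ^ 2
        = (∑ a ∈ range m, u i j a ^ 2 + ∑ a ∈ Ico m (2 * m), u i j a ^ 2)
          + u i j (2 * m) ^ 2 := by
      rw [show d = 2 * m + 1 from hm, Finset.sum_range_succ,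
        Finset.sum_range_add_sum_Ico _ (by omega : m ≤ 2 * m)]
    rw [hsplit, Finset.sum_Ico_eq_sum_range, Finset.sum_congr rfl h1,
      Finset.sum_congr rfl h2, Finset.sum_const, Finset.sum_const, card_range, card_range,
      hu3 i j, nsmul_eq_mul, nsmul_eq_mul]
    have hpow1 : ((-1 : ℝ) ^ j) * ((-1 : ℝ) ^ j) = 1 := by
      rw [← pow_add]
      exact Even.neg_one_pow ⟨j, rfl⟩
    have hcs : Real.sin (2 * π * j / r) ^ 2 + Real.cos (2 * π * j / r) ^ 2 = 1 :=
      Real.sin_sq_add_cos_sq _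
    have hp' : ((-1 : ℝ) ^ j * p) ^ 2 = p ^ 2 := by
      rw [mul_pow]
      linear_combination p ^ 2 * hpow1
    have hsub2 : (2 * m - m : ℕ) = m := by omega
    rw [hp', hq2, hp2, hsub2, hdR]
    have h0 : (2 * (m : ℝ) + 1) ≠ 0 := by positivity
    field_simp
    linear_combination (2 * (m : ℝ)) * hcs
  · -- orthogonality
    intro a ha b hb
    have ha' : a ≤ 2 * m := by have := mem_range.mp ha; omega
    have hb' : b ≤ 2 * m := by have := mem_range.mp hb; omega
    have hacase : a < m ∨ (m ≤ a ∧ a < 2 * m) ∨ a = 2 * m := by omega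
    have hbcase : b < m ∨ (m ≤ b ∧ b < 2 * m) ∨ b = 2 * m := by omega
    have goalval : (r * 2 ^ n : ℝ) / d = (2 ^ n : ℝ) * (q ^ 2 * (r / 2)) := by
      rw [hq2]
      field_simp
    rcases hacase with hac | hac | hac <;> rcases hbcase with hbc | hbc | hbc
    · -- cos cos
      have hfg : ∀ i ∈ range (2 ^ n), ∀ j ∈ Icc 1 r, u i j a * u i j b
          = (fun i => H' a i * H' b i) i
            * (fun j : ℕ => q ^ 2 * Real.cos (2 * π * j / r) ^ 2) j := by
        intro i hi j hj
        rw [hu1 i j a hac, hu1 i j b hbc]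
        ring
      rw [sum_sum_eq_mul _ _ _ _ _ hfg, ← Finset.mul_sum, T1]
      by_cases hab : a = b
      · subst hab
        rw [if_pos rfl, hIdiag a hac, goalval]
      · rw [if_neg hab, hH2 a hac b hbc hab, zero_mul]
    · -- cos sin
      have hfg : ∀ i ∈ range (2 ^ n), ∀ j ∈ Icc 1 r, u i j a * u i j b
          = (fun i => H' a i * H' (b - m) i) i
            * (fun j : ℕ => q ^ 2 * (Real.cos (2 * π * j / r) * Real.sin (2 * π * j / r))) j := by
        intro i hi j hj
        rw [hu1 i j a hac, hu2 i j b hbc.1 hbc.2]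
        ring
      rw [sum_sum_eq_mul _ _ _ _ _ hfg, ← Finset.mul_sum, T3, mul_zero, mul_zero,
        if_neg (by omega)]
    · -- cos last
      subst hbc
      have hfg : ∀ i ∈ range (2 ^ n), ∀ j ∈ Icc 1 r, u i j a * u i j (2 * m)
          = (fun i => H' a i) i
            * (fun j : ℕ => (q * p) * ((-1 : ℝ) ^ j * Real.cos (2 * π * j / r))) j := by
        intro i hi j hj
        rw [hu1 i j a hac, hu3 i j]
        ring
      rw [sum_sum_eq_mul _ _ _ _ _ hfg, ← Finset.mul_sum, T4, mul_zero, mul_zero,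
        if_neg (by omega)]
    · -- sin cos
      have hfg : ∀ i ∈ range (2 ^ n), ∀ j ∈ Icc 1 r, u i j a * u i j b
          = (fun i => H' (a - m) i * H' b i) i
            * (fun j : ℕ => q ^ 2 * (Real.cos (2 * π * j / r) * Real.sin (2 * π * j / r))) j := by
        intro i hi j hj
        rw [hu2 i j a hac.1 hac.2, hu1 i j b hbc]
        ring
      rw [sum_sum_eq_mul _ _ _ _ _ hfg, ← Finset.mul_sum, T3, mul_zero, mul_zero,
        if_neg (by omega)]
    · -- sin sin
      have hfg : ∀ i ∈ range (2 ^ n), ∀ j ∈ Icc 1 r, u i j a * u i j b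
          = (fun i => H' (a - m) i * H' (b - m) i) i
            * (fun j : ℕ => q ^ 2 * Real.sin (2 * π * j / r) ^ 2) j := by
        intro i hi j hj
        rw [hu2 i j a hac.1 hac.2, hu2 i j b hbc.1 hbc.2]
        ring
      rw [sum_sum_eq_mul _ _ _ _ _ hfg, ← Finset.mul_sum, T2]
      by_cases hab : a = b
      · subst hab
        rw [if_pos rfl, hIdiag (a - m) (by omega), goalval]
      · rw [if_neg hab, hH2 (a - m) (by omega) (b - m) (by omega) (by omega), zero_mul]
    · -- sin last
      subst hbc
      have hfg : ∀ i ∈ range (2 ^ n), ∀ j ∈ Icc 1 r, u i j a * u i j (2 * m)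
          = (fun i => H' (a - m) i) i
            * (fun j : ℕ => (q * p) * ((-1 : ℝ) ^ j * Real.sin (2 * π * j / r))) j := by
        intro i hi j hj
        rw [hu2 i j a hac.1 hac.2, hu3 i j]
        ring
      rw [sum_sum_eq_mul _ _ _ _ _ hfg, ← Finset.mul_sum, T5, mul_zero, mul_zero,
        if_neg (by omega)]
    · -- last cos
      subst hac
      have hfg : ∀ i ∈ range (2 ^ n), ∀ j ∈ Icc 1 r, u i j (2 * m) * u i j b
          = (fun i => H' b i) i
            * (fun j : ℕ => (q * p) * ((-1 : ℝ) ^ j * Real.cos (2 * π * j / r))) j := by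
        intro i hi j hj
        rw [hu1 i j b hbc, hu3 i j]
        ring
      rw [sum_sum_eq_mul _ _ _ _ _ hfg, ← Finset.mul_sum, T4, mul_zero, mul_zero,
        if_neg (by omega)]
    · -- last sin
      subst hac
      have hfg : ∀ i ∈ range (2 ^ n), ∀ j ∈ Icc 1 r, u i j (2 * m) * u i j b
          = (fun i => H' (b - m) i) i
            * (fun j : ℕ => (q * p) * ((-1 : ℝ) ^ j * Real.sin (2 * π * j / r))) j := by
        intro i hi j hj
        rw [hu2 i j b hbc.1 hbc.2, hu3 i j]
        ring
      rw [sum_sum_eq_mul _ _ _ _ _ hfg, ← Finset.mul_sum, T5, mul_zero, mul_zero,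
        if_neg (by omega)]
    · -- last last
      subst hac
      subst hbc
      have hfg : ∀ i ∈ range (2 ^ n), ∀ j ∈ Icc 1 r, u i j (2 * m) * u i j (2 * m)
          = (fun _ : ℕ => (1 : ℝ)) i * (fun _ : ℕ => p ^ 2) j := by
        intro i hi j hj
        rw [hu3 i j]
        have hpow1 : ((-1 : ℝ) ^ j) * ((-1 : ℝ) ^ j) = 1 := by
          rw [← pow_add]
          exact Even.neg_one_pow ⟨j, rfl⟩
        simp only [one_mul]
        linear_combination p ^ 2 * hpow1
      rw [sum_sum_eq_mul _ _ _ _ _ hfg, if_pos rfl, Finset.sum_const, Finset.sum_const,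
        card_range, cardIcc, hp2]
      push_cast
      field_simp
      ring_nf
      simp [hdne]
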